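/- Let D be a small directed partial order, let F be a functor from D to the category of ωcpos and continuous maps, let n ∈ ℕ, and suppose that each F(d) is equipped with a continuous n-ary operation σ_d : F(d)ⁿ → F(d) such that every connecting map F(δ) : F(d) → F(d') (for δ : d ≤ d') preserves the operations, i.e. F(δ)(σ_d(a)) = σ_{d'}(F(δ) ∘ a) for all a ∈ F(d)ⁿ. If (c_d : F(d) → C)_{d ∈ D} is a colimit cocone in the category of ωcpos and continuous maps, then there exists a unique continuous n-ary operation σ_C : Cⁿ → C such that every c_d preserves the operations, i.e. c_d(σ_d(a)) = σ_C(c_d ∘ a) for all d ∈ D and a ∈ F(d)ⁿ. -/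

import Mathlib

open CategoryTheory CategoryTheory.Limits OmegaCompletePartialOrder

universe u

namespace ColimOp

variable {α : Type*} [OmegaCompletePartialOrder α]

lemma ωSup_congr {ch₁ ch₂ : Chain α} (h : ∀ i, ch₁ i = ch₂ i) : ωSup ch₁ = ωSup ch₂ := by
  congr 1; exact Chain.ext (funext h)

lemma ωSup_const (x : α) : ωSup ⟨fun _ => x, monotone_const⟩ = x :=
  le_antisymm (ωSup_le _ _ fun _ => le_rfl) (le_ωSup (⟨fun _ => x, monotone_const⟩ : Chain α) 0)

variable {D : Type u} [PartialOrder D] [IsDirected D (· ≤ ·)]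
  {F : D ⥤ ωCPO.{u}} {c : Cocone F}

lemma comp_apply' {X Y Z : ωCPO.{u}} (f : X ⟶ Y) (g : Y ⟶ Z) (x : ↥X) :
    (f ≫ g).toFun x = g.toFun (f.toFun x) := rfl

lemma w_apply {d d' : D} (h : d ≤ d') (x : ↥(F.obj d)) :
    (c.ι.app d').toFun ((F.map (homOfLE h)).toFun x) = (c.ι.app d).toFun x := by
  rw [← c.w (homOfLE h)]; rfl

lemma map_map {d d' d'' : D} (h : d ≤ d') (h' : d' ≤ d'') (x : ↥(F.obj d)) :
    (F.map (homOfLE h')).toFun ((F.map (homOfLE h)).toFun x)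
      = (F.map (homOfLE (h.trans h'))).toFun x := by
  rw [← homOfLE_comp h h', F.map_comp]; rfl

/-- Generation lemma: every ωSup-closed predicate containing all images of the cocone
components of a colimit cocone holds everywhere. -/
lemma mem_closure (hc : IsColimit c) (p : ↥c.pt → Prop)
    (hsup : ∀ ch : Chain ↥c.pt, (∀ i, p (ch i)) → p (ωSup ch))
    (hbase : ∀ (d : D) (x : ↥(F.obj d)), p ((c.ι.app d).toFun x)) (y : ↥c.pt) : p y := by
  letI : OmegaCompletePartialOrder {y : ↥c.pt // p y} :=
    OmegaCompletePartialOrder.subtype p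
      (fun ch h => hsup ch (fun i => h (ch i) ⟨i, rfl⟩))
  let S : ωCPO.{u} := ωCPO.of {y : ↥c.pt // p y}
  let incl : S ⟶ c.pt := ⟨⟨Subtype.val, fun _ _ h => h⟩, fun _ => rfl⟩
  let s : Cocone F :=
    { pt := S
      ι :=
        { app := fun d =>
            ⟨⟨fun x => ⟨(c.ι.app d).toFun x, hbase d x⟩,
              fun _ _ h => (c.ι.app d).monotone h⟩,
              fun ch => Subtype.ext ((c.ι.app d).continuous ch)⟩
          naturality := by
            intro d d' h
            apply ContinuousHom.ext
            intro x
            apply Subtype.ext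
            show (c.ι.app d').toFun ((F.map h).toFun x) = (c.ι.app d).toFun x
            rw [← c.w h]; rfl } }
  have key : hc.desc s ≫ incl = 𝟙 c.pt := by
    apply hc.hom_ext
    intro d
    rw [← Category.assoc, hc.fac s d]
    apply ContinuousHom.ext
    intro x
    rfl
  have h2 : ((hc.desc s).toFun y).val = y := by
    have := congrArg (fun f : c.pt ⟶ c.pt => f.toFun y) key
    exact this
  exact h2 ▸ ((hc.desc s).toFun y).2


/-- Product generation: an ωSup-closed predicate on `(Fin n → C)` containing all tuples coming
from a single stage holds everywhere. -/
lemma mem_closure_pi [Nonempty D] (hc : IsColimit c) (n : ℕ)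
    (T : (Fin n → ↥c.pt) → Prop)
    (hsup : ∀ ch : Chain (Fin n → ↥c.pt), (∀ i, T (ch i)) → T (ωSup ch))
    (hbase : ∀ (d : D) (a : Fin n → ↥(F.obj d)), T (fun i => (c.ι.app d).toFun (a i)))
    (x : Fin n → ↥c.pt) : T x := by
  have key : ∀ (k : ℕ) (x : Fin n → ↥c.pt) (d : D) (a : Fin n → ↥(F.obj d)),
      (∀ i : Fin n, k ≤ (i : ℕ) → x i = (c.ι.app d).toFun (a i)) → T x := by
    intro k
    induction k with
    | zero =>
      intro x d a h
      have : x = fun i => (c.ι.app d).toFun (a i) := funext fun i => h i (Nat.zero_le _)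
      rw [this]; exact hbase d a
    | succ k IH =>
      intro x d a h
      by_cases hk : k < n
      · set κ : Fin n := ⟨k, hk⟩ with hκ
        have hupd : ∀ y : ↥c.pt, (fun z => T (Function.update x κ z)) y := by
          intro y
          apply mem_closure hc (fun z => T (Function.update x κ z))
          · intro ch hch
            have hmono : Monotone (fun j : ℕ => Function.update x κ (ch j)) := by
              intro j j' hj i
              rcases eq_or_ne i κ with rfl | hne
              · simp only [Function.update_self]; exact ch.monotone hj
              · simp only [Function.update_of_ne hne]; exact le_rfl
            have heq : Function.update x κ (ωSup ch) = ωSup (⟨_, hmono⟩ : Chain (Fin n → ↥c.pt)) := by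
              funext i
              have hPi : (ωSup (⟨_, hmono⟩ : Chain (Fin n → ↥c.pt))) i
                  = ωSup (Chain.map (⟨_, hmono⟩ : Chain (Fin n → ↥c.pt)) (Pi.evalOrderHom i)) :=
                rfl
              rcases eq_or_ne i κ with rfl | hne
              · rw [Function.update_self, hPi]
                exact ωSup_congr (fun j => (Function.update_self κ (ch j) x).symm)
              · rw [Function.update_of_ne hne, hPi,
                  show (Chain.map (⟨_, hmono⟩ : Chain (Fin n → ↥c.pt)) (Pi.evalOrderHom i))
                      = (⟨fun _ => x i, monotone_const⟩ : Chain ↥c.pt) from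
                    Chain.ext (funext fun j => Function.update_of_ne hne _ _)]
                exact (ωSup_const (x i)).symm
            rw [heq]
            exact hsup _ hch
          · intro e b
            obtain ⟨t, h1, h2⟩ := directed_of (· ≤ ·) d e
            refine IH (Function.update x κ ((c.ι.app e).toFun b)) t
              (Function.update (fun i => (F.map (homOfLE h1)).toFun (a i)) κ
                ((F.map (homOfLE h2)).toFun b)) (fun i hi => ?_)
            rcases eq_or_ne i κ with rfl | hne
            · rw [Function.update_self, Function.update_self]
              exact (w_apply h2 b).symm
            · have hki : (k : ℕ) < (i : ℕ) := by
                rcases lt_or_eq_of_le hi with h' | h'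
                · omega
                · exact absurd (Fin.ext h'.symm : i = κ) hne
              rw [Function.update_of_ne hne, Function.update_of_ne hne, w_apply h1 (a i)]
              exact h i hki
        have := hupd (x κ)
        simp only [Function.update_eq_self] at this
        exact this
      · exact IH x d a (fun i hi => absurd (lt_of_le_of_lt hi i.isLt) hk)
  rcases Nat.eq_zero_or_pos n with rfl | hn
  · have : x = fun i => (c.ι.app (Classical.arbitrary D)).toFun (i.elim0) :=
      funext fun i => i.elim0
    rw [this]; exact hbase _ _
  · have hne : ∃ d : D, Nonempty ↥(F.obj d) := by
      refine mem_closure hc (fun _ => ∃ d : D, Nonempty ↥(F.obj d)) ?_ ?_ (x ⟨0, hn⟩)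
      · intro ch hch; exact hch 0
      · intro d b; exact ⟨d, ⟨b⟩⟩
    obtain ⟨d₀, ⟨b₀⟩⟩ := hne
    exact key n x d₀ (fun _ => b₀) (fun i hi => absurd (lt_of_le_of_lt hi i.isLt) (lt_irrefl _))

/-- Uniqueness of a compatible continuous operation on the colimit. -/
lemma op_unique [Nonempty D] (hc : IsColimit c) (n : ℕ)
    (σ : ∀ d : D, (Fin n → ↥(F.obj d)) → ↥(F.obj d))
    {σC σC' : (Fin n → ↥c.pt) → ↥c.pt}
    (h1 : ωScottContinuous σC)
    (h1' : ∀ (d : D) (a : Fin n → ↥(F.obj d)),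
      (c.ι.app d).toFun (σ d a) = σC (fun i => (c.ι.app d).toFun (a i)))
    (h2 : ωScottContinuous σC')
    (h2' : ∀ (d : D) (a : Fin n → ↥(F.obj d)),
      (c.ι.app d).toFun (σ d a) = σC' (fun i => (c.ι.app d).toFun (a i))) :
    σC = σC' := by
  funext x
  refine mem_closure_pi hc n (fun x => σC x = σC' x) ?_ ?_ x
  · intro ch hch
    rw [h1.map_ωSup, h2.map_ωSup]
    exact ωSup_congr (fun i => hch i)
  · intro d a
    rw [← h1' d a, h2' d a]


section Up

variable {D : Type u} [PartialOrder D] [IsDirected D (· ≤ ·)]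

/-- The subposet of elements above `d`. -/
abbrev Up (d : D) : Type u := {e : D // d ≤ e}

instance (d : D) : Nonempty (Up d) := ⟨⟨d, le_rfl⟩⟩

instance (d : D) : IsDirected (Up d) (· ≤ ·) := by
  constructor
  intro e₁ e₂
  obtain ⟨t, h1, h2⟩ := directed_of (· ≤ ·) e₁.1 e₂.1
  exact ⟨⟨t, e₁.2.trans h1⟩, Subtype.coe_le_coe.mp h1, Subtype.coe_le_coe.mp h2⟩

/-- Inclusion functor of the subposet of elements above `d`. -/
def upFunctor (d : D) : Up d ⥤ D :=
  Monotone.functor (f := fun e : Up d => e.1) (fun _ _ h => h)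

@[simp] lemma upFunctor_obj (d : D) (e : Up d) : (upFunctor d).obj e = e.1 := rfl

variable (F : D ⥤ ωCPO.{u}) {c : Cocone F}

lemma whisker_app (d : D) (e : Up d) :
    (c.whisker (upFunctor d)).ι.app e = c.ι.app e.1 := rfl

/-- The restriction of a colimit cocone to a coslice (a cofinal subposet) is a colimit. -/
noncomputable def upIsColimit (hc : IsColimit c) (d : D) :
    IsColimit (c.whisker (upFunctor d)) := by
  have sel : ∀ e : D, ∃ u : Up d, e ≤ u.1 := by
    intro e
    obtain ⟨t, h1, h2⟩ := directed_of (· ≤ ·) d e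
    exact ⟨⟨t, h1⟩, h2⟩
  choose u hu using sel
  have hs : ∀ (s : Cocone (upFunctor d ⋙ F)) (e : D) (v w : Up d)
      (hv : e ≤ v.1) (hw : e ≤ w.1),
      F.map (homOfLE hv) ≫ s.ι.app v = F.map (homOfLE hw) ≫ s.ι.app w := by
    intro s e v w hv hw
    obtain ⟨t, h1, h2⟩ := directed_of (· ≤ ·) v.1 w.1
    have ht : d ≤ t := v.2.trans h1
    have hvt : v ≤ (⟨t, ht⟩ : Up d) := Subtype.coe_le_coe.mp h1
    have hwt : w ≤ (⟨t, ht⟩ : Up d) := Subtype.coe_le_coe.mp h2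
    rw [← s.w (homOfLE hvt), ← s.w (homOfLE hwt)]
    erw [← Category.assoc, ← Category.assoc]
    congr 1
    show F.map (homOfLE hv) ≫ F.map (homOfLE h1) = F.map (homOfLE hw) ≫ F.map (homOfLE h2)
    rw [← F.map_comp, ← F.map_comp]
    exact congrArg F.map (Subsingleton.elim _ _)
  let ext : Cocone (upFunctor d ⋙ F) → Cocone F := fun s =>
    { pt := s.pt
      ι :=
        { app := fun e => F.map (homOfLE (hu e)) ≫ s.ι.app (u e)
          naturality := by
            intro e e' f
            simp only [Functor.const_obj_map, Category.comp_id]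
            have h3 : F.map f ≫ F.map (homOfLE (hu e')) ≫ s.ι.app (u e')
                = F.map (homOfLE ((leOfHom f).trans (hu e'))) ≫ s.ι.app (u e') := by
              erw [← Category.assoc]; rw [← F.map_comp]
              congr 1
            rw [h3]
            exact hs s e _ _ _ _ } }
  refine
    { desc := fun s => hc.desc (ext s)
      fac := ?_
      uniq := ?_ }
  · intro s e
    show c.ι.app e.1 ≫ hc.desc (ext s) = s.ι.app e
    rw [hc.fac (ext s) e.1]
    show F.map (homOfLE (hu e.1)) ≫ s.ι.app (u e.1) = s.ι.app e
    rw [hs s e.1 (u e.1) e (hu e.1) le_rfl]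
    exact s.w (homOfLE le_rfl)
  · intro s m hm
    apply hc.uniq (ext s)
    intro e
    have h2 : c.ι.app e = F.map (homOfLE (hu e)) ≫ c.ι.app (u e).1 := (c.w (homOfLE (hu e))).symm
    rw [h2, Category.assoc]
    have h3 : c.ι.app (u e).1 ≫ m = s.ι.app (u e) := hm (u e)
    rw [h3]

end Up


section Cons

variable {X : Type*} [OmegaCompletePartialOrder X]

lemma cons_mono {n : ℕ} {w w' : X} {a a' : Fin n → X} (hw : w ≤ w') (ha : a ≤ a') :
    (Fin.cons w a : Fin (n + 1) → X) ≤ Fin.cons w' a' := by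
  intro i
  refine Fin.cases ?_ ?_ i
  · simpa using hw
  · intro j; simpa using ha j

lemma cons_chain_mono {n : ℕ} (chw : Chain X) (ch : Chain (Fin n → X)) :
    Monotone (fun j => (Fin.cons (chw j) (ch j) : Fin (n + 1) → X)) :=
  fun _ _ hj => cons_mono (chw.monotone hj) (ch.monotone hj)

lemma ωSup_fin_cons {n : ℕ} (chw : Chain X) (ch : Chain (Fin n → X)) :
    (Fin.cons (ωSup chw) (ωSup ch) : Fin (n + 1) → X)
      = ωSup ⟨fun j => Fin.cons (chw j) (ch j), cons_chain_mono chw ch⟩ := by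
  funext i
  have hPi : ∀ i : Fin (n + 1),
      (ωSup (⟨fun j => Fin.cons (chw j) (ch j), cons_chain_mono chw ch⟩ :
        Chain (Fin (n + 1) → X))) i
      = ωSup (Chain.map
          (⟨fun j => Fin.cons (chw j) (ch j), cons_chain_mono chw ch⟩ : Chain (Fin (n + 1) → X))
          (Pi.evalOrderHom i)) := fun _ => rfl
  refine Fin.cases ?_ ?_ i
  · rw [Fin.cons_zero, hPi 0]
    refine ωSup_congr fun j => ?_
    show chw j = (Fin.cons (chw j) (ch j) : Fin (n + 1) → X) 0
    simp
  · intro j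
    rw [Fin.cons_succ, hPi j.succ]
    show ωSup (Chain.map ch (Pi.evalOrderHom j)) = _
    refine ωSup_congr fun i' => ?_
    show ch i' j = (Fin.cons (chw i') (ch i') : Fin (n + 1) → X) j.succ
    simp

lemma ωSup_fin_cons_left {n : ℕ} (chw : Chain X) (a : Fin n → X) :
    (Fin.cons (ωSup chw) a : Fin (n + 1) → X)
      = ωSup ⟨fun j => Fin.cons (chw j) a,
          cons_chain_mono chw ⟨fun _ => a, monotone_const⟩⟩ := by
  have h := ωSup_fin_cons chw (⟨fun _ => a, monotone_const⟩ : Chain (Fin n → X))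
  rw [ωSup_const a] at h
  exact h

lemma ωSup_fin_cons_right {n : ℕ} (w : X) (ch : Chain (Fin n → X)) :
    (Fin.cons w (ωSup ch) : Fin (n + 1) → X)
      = ωSup ⟨fun j => Fin.cons w (ch j),
          cons_chain_mono ⟨fun _ => w, monotone_const⟩ ch⟩ := by
  have h := ωSup_fin_cons (⟨fun _ => w, monotone_const⟩ : Chain X) ch
  rw [ωSup_const w] at h
  exact h

lemma map_fin_cons {Y : Type*} (f : X → Y) {n : ℕ} (w : X) (a : Fin n → X) :
    (fun i => f ((Fin.cons w a : Fin (n + 1) → X) i))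
      = Fin.cons (f w) (fun i => f (a i)) := by
  funext i; refine Fin.cases ?_ ?_ i <;> simp

end Cons

section Exists

lemma cont_toFun {X Y : ωCPO.{u}} (f : X ⟶ Y) (ch : Chain ↥X) :
    f.toFun (ωSup ch) = ωSup (ch.map f.toOrderHom) :=
  f.continuous ch

theorem op_exists (n : ℕ) : ∀ {D : Type u} [PartialOrder D] [Nonempty D]
    [IsDirected D (· ≤ ·)]
    (F : D ⥤ ωCPO.{u}) (σ : ∀ d : D, (Fin n → ↥(F.obj d)) → ↥(F.obj d)),
    (∀ d, ωScottContinuous (σ d)) →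
    (∀ (d d' : D) (h : d ⟶ d') (a : Fin n → ↥(F.obj d)),
      (F.map h).toFun (σ d a) = σ d' (fun i => (F.map h).toFun (a i))) →
    ∀ (c : Cocone F), IsColimit c →
    ∃ σC : (Fin n → ↥c.pt) → ↥c.pt, ωScottContinuous σC ∧
      ∀ (d : D) (a : Fin n → ↥(F.obj d)),
        (c.ι.app d).toFun (σ d a) = σC (fun i => (c.ι.app d).toFun (a i)) := by
  induction n with
  | zero =>
    intro D _ _ _ F σ hσ hcompat c hc
    have hD : Nonempty D := inferInstance
    set d₀ := Classical.arbitrary D with hd₀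
    refine ⟨fun _ => (c.ι.app d₀).toFun (σ d₀ (fun i => i.elim0)), ωScottContinuous.const, ?_⟩
    intro d a
    obtain ⟨t, h1, h2⟩ := directed_of (· ≤ ·) d d₀
    have e1 : (c.ι.app d).toFun (σ d a) = (c.ι.app t).toFun (σ t (fun i => i.elim0)) := by
      rw [← w_apply h1 (σ d a), hcompat d t (homOfLE h1) a]
      congr 1
      congr 1
      exact funext fun i => i.elim0
    have e2 : (c.ι.app d₀).toFun (σ d₀ (fun i => i.elim0))
        = (c.ι.app t).toFun (σ t (fun i => i.elim0)) := by
      rw [← w_apply h2 (σ d₀ (fun i => i.elim0)), hcompat d₀ t (homOfLE h2) (fun i => i.elim0)]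
      congr 1
      congr 1
      exact funext fun i => i.elim0
    rw [e1, e2]
  | succ n IH =>
    intro D _ _ _ F σ hσ hcompat c hc
    -- Step 1: for each stage `d` and element `b`, an `n`-ary operation on the colimit
    have hex : ∀ (d : D) (b : ↥(F.obj d)), ∃ τ : (Fin n → ↥c.pt) → ↥c.pt,
        ωScottContinuous τ ∧ ∀ (e : Up d) (a : Fin n → ↥(F.obj e.1)),
          (c.ι.app e.1).toFun (σ e.1 (Fin.cons ((F.map (homOfLE e.2)).toFun b) a))
            = τ (fun i => (c.ι.app e.1).toFun (a i)) := by
      intro d b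
      have hσ' : ∀ e : Up d, ωScottContinuous
          (fun a : Fin n → ↥(F.obj e.1) =>
            σ e.1 (Fin.cons ((F.map (homOfLE e.2)).toFun b) a)) := by
        intro e
        refine ωScottContinuous.of_monotone_map_ωSup
          ⟨fun a a' ha => (hσ e.1).monotone (cons_mono le_rfl ha), fun ch => ?_⟩
        rw [ωSup_fin_cons_right, (hσ e.1).map_ωSup]
        exact ωSup_congr fun j => rfl
      obtain ⟨τ, hτ1, hτ2⟩ := IH (upFunctor d ⋙ F)
        (fun e a => σ e.1 (Fin.cons ((F.map (homOfLE e.2)).toFun b) a))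
        hσ'
        (by
          intro e e' h a
          change Fin n → ↥(F.obj e.1) at a
          show (F.map ((upFunctor d).map h)).toFun
              (σ e.1 (Fin.cons ((F.map (homOfLE e.2)).toFun b) a)) = _
          refine (hcompat e.1 e'.1 ((upFunctor d).map h)
            (Fin.cons ((F.map (homOfLE e.2)).toFun b) a)).trans ?_
          show σ e'.1 (fun i => (F.map ((upFunctor d).map h)).toFun
            ((Fin.cons ((F.map (homOfLE e.2)).toFun b) a : Fin (n+1) → _) i)) = _
          erw [map_fin_cons]
          have hhead : (F.map ((upFunctor d).map h)).toFun ((F.map (homOfLE e.2)).toFun b)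
              = (F.map (homOfLE e'.2)).toFun b := by
            rw [show (upFunctor d).map h = homOfLE (Subtype.coe_le_coe.mpr (leOfHom h)) from rfl]
            exact map_map e.2 (Subtype.coe_le_coe.mpr (leOfHom h)) b
          erw [hhead]
          rfl)
        (c.whisker (upFunctor d)) (upIsColimit F hc d)
      exact ⟨τ, hτ1, hτ2⟩
    choose τ hτcont hτcompat using hex
    -- Step 2: naturality of τ in the stage
    have hnat : ∀ (d d' : D) (h : d ≤ d') (b : ↥(F.obj d)),
        τ d b = τ d' ((F.map (homOfLE h)).toFun b) := by
      intro d d' h b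
      refine op_unique (upIsColimit F hc d') n
        (fun (e : Up d') a =>
          σ e.1 (Fin.cons ((F.map (homOfLE e.2)).toFun ((F.map (homOfLE h)).toFun b)) a))
        (hτcont d b) ?_ (hτcont d' _) (hτcompat d' _)
      intro e a
      show (c.ι.app e.1).toFun
          (σ e.1 (Fin.cons ((F.map (homOfLE e.2)).toFun ((F.map (homOfLE h)).toFun b)) a))
        = τ d b (fun i => (c.ι.app e.1).toFun (a i))
      rw [map_map h e.2 b]
      exact hτcompat d b ⟨e.1, h.trans e.2⟩ a
    -- Step 3: monotonicity of τ in the element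
    have hmonob : ∀ (d : D) (b b' : ↥(F.obj d)), b ≤ b' →
        ∀ y, τ d b y ≤ τ d b' y := by
      intro d b b' hbb' y
      refine mem_closure_pi (upIsColimit F hc d) n (fun y => τ d b y ≤ τ d b' y) ?_ ?_ y
      · intro ch hch
        show τ d b (ωSup ch) ≤ τ d b' (ωSup ch)
        rw [(hτcont d b).map_ωSup, (hτcont d b').map_ωSup]
        exact ωSup_le _ _ fun j => le_ωSup_of_le j (hch j)
      · intro e a
        show τ d b (fun i => (c.ι.app e.1).toFun (a i))
          ≤ τ d b' (fun i => (c.ι.app e.1).toFun (a i))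
        rw [← hτcompat d b e a, ← hτcompat d b' e a]
        exact (c.ι.app e.1).monotone ((hσ e.1).monotone
          (cons_mono ((F.map (homOfLE e.2)).monotone hbb') le_rfl))
    -- Step 4: continuity of τ in the element
    have hcontb : ∀ (d : D) (ch : Chain ↥(F.obj d)) (y : Fin n → ↥c.pt),
        τ d (ωSup ch) y
          = ωSup (ch.map ⟨fun b => τ d b y, fun _ _ h => hmonob d _ _ h y⟩) := by
      intro d ch y
      refine mem_closure_pi (upIsColimit F hc d) n
        (fun y => τ d (ωSup ch) y
          = ωSup (ch.map ⟨fun b => τ d b y, fun _ _ h => hmonob d _ _ h y⟩)) ?_ ?_ y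
      · intro Y hY
        show τ d (ωSup ch) (ωSup Y) = ωSup (ch.map ⟨fun b => τ d b (ωSup Y), _⟩)
        apply le_antisymm
        · rw [(hτcont d (ωSup ch)).map_ωSup]
          apply ωSup_le
          intro j
          show τ d (ωSup ch) (Y j) ≤ _
          rw [hY j]
          apply ωSup_le
          intro i
          show τ d (ch i) (Y j) ≤ _
          exact le_ωSup_of_le i ((hτcont d (ch i)).monotone (le_ωSup Y j))
        · apply ωSup_le
          intro i
          show τ d (ch i) (ωSup Y) ≤ τ d (ωSup ch) (ωSup Y)
          exact hmonob d _ _ (le_ωSup ch i) _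
      · intro e a
        change Fin n → ↥(F.obj e.1) at a
        show τ d (ωSup ch) (fun i => (c.ι.app e.1).toFun (a i))
          = ωSup (ch.map ⟨fun b => τ d b (fun i => (c.ι.app e.1).toFun (a i)), _⟩)
        rw [← hτcompat d (ωSup ch) e a, cont_toFun (F.map (homOfLE e.2)) ch,
          ωSup_fin_cons_left, (hσ e.1).map_ωSup, cont_toFun (c.ι.app e.1)]
        exact ωSup_congr fun j => hτcompat d (ch j) e a
    -- Step 5: for each tuple `y`, a morphism `m y : c.pt ⟶ c.pt`
    have hmy : ∀ y : Fin n → ↥c.pt, ∃ mm : c.pt ⟶ c.pt, ∀ (d : D) (b : ↥(F.obj d)),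
        mm.toFun ((c.ι.app d).toFun b) = τ d b y := by
      intro y
      let s : Cocone F :=
        { pt := c.pt
          ι :=
            { app := fun d => ⟨⟨fun b => τ d b y, fun b b' h => hmonob d b b' h y⟩,
                fun ch => hcontb d ch y⟩
              naturality := by
                intro d d' h
                apply ContinuousHom.ext
                intro b
                show τ d' ((F.map h).toFun b) y = τ d b y
                rw [hnat d d' (leOfHom h) b]
                exact congrArg (fun g => τ d' ((F.map g).toFun b) y)
                  (homOfLE_leOfHom h) } }
      exact ⟨hc.desc s, fun d b =>
        congrArg (fun f : F.obj d ⟶ c.pt => f.toFun b) (hc.fac s d)⟩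
    choose m hm using hmy
    -- Step 6: monotonicity and continuity of `m` in `y`
    have hmmono : ∀ y y' : Fin n → ↥c.pt, y ≤ y' → ∀ z, (m y).toFun z ≤ (m y').toFun z := by
      intro y y' hyy'
      refine mem_closure hc (fun z => (m y).toFun z ≤ (m y').toFun z) ?_ ?_
      · intro ch hch
        show (m y).toFun (ωSup ch) ≤ (m y').toFun (ωSup ch)
        rw [cont_toFun, cont_toFun]
        exact ωSup_le _ _ fun j => le_ωSup_of_le j (hch j)
      · intro d b
        show (m y).toFun ((c.ι.app d).toFun b) ≤ (m y').toFun ((c.ι.app d).toFun b)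
        rw [hm y d b, hm y' d b]
        exact (hτcont d b).monotone hyy'
    have hmcont : ∀ (Y : Chain (Fin n → ↥c.pt)) (z : ↥c.pt),
        (m (ωSup Y)).toFun z
          = ωSup (Y.map ⟨fun y => (m y).toFun z, fun _ _ h => hmmono _ _ h z⟩) := by
      intro Y z
      refine mem_closure hc (fun z => (m (ωSup Y)).toFun z
        = ωSup (Y.map ⟨fun y => (m y).toFun z, fun _ _ h => hmmono _ _ h z⟩)) ?_ ?_ z
      · intro ch hch
        show (m (ωSup Y)).toFun (ωSup ch) = ωSup (Y.map ⟨fun y => (m y).toFun (ωSup ch), _⟩)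
        apply le_antisymm
        · rw [cont_toFun]
          apply ωSup_le
          intro j
          show (m (ωSup Y)).toFun (ch j) ≤ _
          rw [hch j]
          apply ωSup_le
          intro i
          show (m (Y i)).toFun (ch j) ≤ _
          exact le_ωSup_of_le i ((m (Y i)).monotone (le_ωSup ch j))
        · apply ωSup_le
          intro i
          show (m (Y i)).toFun (ωSup ch) ≤ (m (ωSup Y)).toFun (ωSup ch)
          exact hmmono _ _ (le_ωSup Y i) _
      · intro d b
        show (m (ωSup Y)).toFun ((c.ι.app d).toFun b)
          = ωSup (Y.map ⟨fun y => (m y).toFun ((c.ι.app d).toFun b), _⟩)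
        rw [hm (ωSup Y) d b, (hτcont d b).map_ωSup]
        exact ωSup_congr fun j => (hm (Y j) d b).symm
    -- Step 7: assemble the operation
    refine ⟨fun x => (m (fun i => x i.succ)).toFun (x 0), ?_, ?_⟩
    · refine ωScottContinuous.of_monotone_map_ωSup ⟨?_, ?_⟩
      · intro x x' hxx'
        exact le_trans (hmmono _ _ (fun i => hxx' i.succ) (x 0))
          ((m (fun i => x' i.succ)).monotone (hxx' 0))
      · intro X
        show (m (fun i => (ωSup X) i.succ)).toFun ((ωSup X) 0) = _
        have htail : (fun i : Fin n => (ωSup X) i.succ)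
            = ωSup (X.map ⟨fun (x : Fin (n + 1) → ↥c.pt) (i : Fin n) => x i.succ, fun _ _ h (i : Fin n) => h i.succ⟩) := by
          funext i
          show ωSup (X.map (Pi.evalOrderHom i.succ)) = _
          show _ = ωSup ((X.map ⟨fun (x : Fin (n + 1) → ↥c.pt) (i : Fin n) => x i.succ, fun _ _ h (i : Fin n) => h i.succ⟩).map
            (Pi.evalOrderHom i))
          exact ωSup_congr fun j => rfl
        have hhead : (ωSup X) 0 = ωSup (X.map (Pi.evalOrderHom 0)) := rfl
        rw [htail, hhead, hmcont]
        apply le_antisymm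
        · apply ωSup_le
          intro j
          show (m (fun i => X j i.succ)).toFun (ωSup (X.map (Pi.evalOrderHom 0))) ≤ _
          rw [cont_toFun]
          apply ωSup_le
          intro i
          show (m (fun i' => X j i'.succ)).toFun (X i 0) ≤ _
          refine le_ωSup_of_le (max j i) (le_trans
            (hmmono _ _ (fun i' => (X.monotone (le_max_left j i)) i'.succ) (X i 0)) ?_)
          exact (m _).monotone ((X.monotone (le_max_right j i)) 0)
        · apply ωSup_le
          intro j
          show (m (fun i => X j i.succ)).toFun (X j 0) ≤ _
          exact le_ωSup_of_le j ((m _).monotone (le_ωSup (X.map (Pi.evalOrderHom 0)) j))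
    · intro d a
      show (c.ι.app d).toFun (σ d a)
        = (m (fun i => (c.ι.app d).toFun (a i.succ))).toFun ((c.ι.app d).toFun (a 0))
      rw [hm (fun i => (c.ι.app d).toFun (a i.succ)) d (a 0)]
      have := hτcompat d (a 0) ⟨d, le_rfl⟩ (fun i => a i.succ)
      rw [← this]
      congr 1
      have h0 : (F.map (homOfLE (le_refl d))).toFun (a 0) = a 0 := by
        rw [show homOfLE (le_refl d) = 𝟙 d from rfl, F.map_id]
        rfl
      rw [h0]
      exact congrArg (σ d) (Fin.cons_self_tail a).symm

end Exists

end ColimOp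

/-- Let `D` be a small directed partial order, `F : D ⥤ ωCPO` a diagram in the category of
ωcpos and continuous maps, and suppose each `F.obj d` carries a continuous `n`-ary operation
`σ d` such that all connecting maps preserve the operations.  If `(c.ι.app d : F.obj d ⟶ c.pt)`
is a colimit cocone of `F`, then there is a unique continuous `n`-ary operation `σC` on the
colimit `c.pt` such that every `c.ι.app d` preserves the operations. -/
theorem colimit_unique_continuous_operation
    {D : Type u} [PartialOrder D] [Nonempty D] [IsDirected D (· ≤ ·)]
    (F : D ⥤ ωCPO.{u}) (n : ℕ)
    (σ : ∀ d : D, (Fin n → ↥(F.obj d)) → ↥(F.obj d))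
    (hσ : ∀ d, ωScottContinuous (σ d))
    (hcompat : ∀ (d d' : D) (h : d ⟶ d') (a : Fin n → ↥(F.obj d)),
      (F.map h).toFun (σ d a) = σ d' (fun i => (F.map h).toFun (a i)))
    (c : Cocone F) (hc : IsColimit c) :
    ∃! σC : (Fin n → ↥c.pt) → ↥c.pt, ωScottContinuous σC ∧
      ∀ (d : D) (a : Fin n → ↥(F.obj d)),
        (c.ι.app d).toFun (σ d a) = σC (fun i => (c.ι.app d).toFun (a i)) := by
  obtain ⟨σC, hcont, hcomm⟩ := ColimOp.op_exists n F σ hσ hcompat c hc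
  refine ⟨σC, ⟨hcont, hcomm⟩, ?_⟩
  rintro σC' ⟨hcont', hcomm'⟩
  exact ColimOp.op_unique hc n σ hcont' hcomm' hcont hcomm
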